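/- Let δ ∈ ℝ and let α, β : J → ℝ be C² functions on an open interval J solving α'' = δα − 2α²β and β'' = δβ − 2αβ² on J. Suppose 0 ∈ J with α(0) = 0 and α'(0)·β(0) > 0, and suppose there are points x_a⁻ < x_b⁻ < 0 < x_b⁺ < x_a⁺ in J such that α(x_a⁻) = α(x_a⁺) = 0, α < 0 on (x_a⁻, 0), α > 0 on (0, x_a⁺), β(x_b⁻) = β(x_b⁺) = 0, β < 0 on (x_a⁻, x_b⁻) ∪ (x_b⁺, x_a⁺), and β > 0 on (x_b⁻, x_b⁺). Then for every s ∈ (x_b⁻, 0) there exists a unique s* ∈ (x_b⁺, x_a⁺) with β(s)·α(s*) = β(s*)·α(s), and the map s ↦ s* is strictly increasing on (x_b⁻, 0). -/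

import Mathlib

open Set Filter Topology

/-- Lemma 5.2: for solutions of `α'' = δα − 2α²β`, `β'' = δβ − 2αβ²` with `α(0) = 0`,
`α'(0)β(0) > 0`, and the stated zero/sign pattern, every `s ∈ (x_b⁻, 0)` admits a unique
`s* ∈ (x_b⁺, x_a⁺)` with `β(s)α(s*) = β(s*)α(s)`, and `s ↦ s*` is strictly increasing. -/
theorem conjugate_point_exists_unique_monotone
    (δ : ℝ) (J : Set ℝ) (hJopen : IsOpen J) (hJconn : J.OrdConnected)
    (α β α' β' α'' β'' : ℝ → ℝ)
    (hα' : ∀ x ∈ J, HasDerivAt α (α' x) x)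
    (hα'' : ∀ x ∈ J, HasDerivAt α' (α'' x) x)
    (hβ' : ∀ x ∈ J, HasDerivAt β (β' x) x)
    (hβ'' : ∀ x ∈ J, HasDerivAt β' (β'' x) x)
    (hODEα : ∀ x ∈ J, α'' x = δ * α x - 2 * (α x) ^ 2 * β x)
    (hODEβ : ∀ x ∈ J, β'' x = δ * β x - 2 * α x * (β x) ^ 2)
    (h0J : (0 : ℝ) ∈ J) (hα0 : α 0 = 0) (hpos : 0 < α' 0 * β 0)
    (xam xbm xbp xap : ℝ)
    (hamJ : xam ∈ J) (hapJ : xap ∈ J)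
    (h1 : xam < xbm) (h2 : xbm < 0) (h3 : 0 < xbp) (h4 : xbp < xap)
    (hαam : α xam = 0) (hαap : α xap = 0)
    (hαneg : ∀ x ∈ Ioo xam (0 : ℝ), α x < 0)
    (hαpos : ∀ x ∈ Ioo (0 : ℝ) xap, 0 < α x)
    (hβbm : β xbm = 0) (hβbp : β xbp = 0)
    (hβneg1 : ∀ x ∈ Ioo xam xbm, β x < 0)
    (hβneg2 : ∀ x ∈ Ioo xbp xap, β x < 0)
    (hβpos : ∀ x ∈ Ioo xbm xbp, 0 < β x) :
    ∃ F : ℝ → ℝ,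
      (∀ s ∈ Ioo xbm (0 : ℝ),
        F s ∈ Ioo xbp xap ∧
        β s * α (F s) = β (F s) * α s ∧
        (∀ t ∈ Ioo xbp xap, β s * α t = β t * α s → t = F s)) ∧
      StrictMonoOn F (Ioo xbm 0) := by
  set c : ℝ := α' 0 * β 0 with hc
  have hIccJ : Icc xam xap ⊆ J := hJconn.out hamJ hapJ
  -- Wronskian has derivative zero
  have hWderiv : ∀ x ∈ J, HasDerivAt (fun x => α' x * β x - α x * β' x) 0 x := by
    intro x hx
    have h := ((hα'' x hx).mul (hβ' x hx)).sub ((hα' x hx).mul (hβ'' x hx))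
    exact h.congr_deriv (by rw [hODEα x hx, hODEβ x hx]; ring)
  -- Wronskian is constant equal to c on J
  have hWconst : ∀ x ∈ J, ∀ y ∈ J, α' x * β x - α x * β' x = α' y * β y - α y * β' y := by
    have key : ∀ a ∈ J, ∀ b ∈ J, a ≤ b →
        α' b * β b - α b * β' b = α' a * β a - α a * β' a := by
      intro a ha b hb hab
      have hsub : Icc a b ⊆ J := hJconn.out ha hb
      have hcont : ContinuousOn (fun x => α' x * β x - α x * β' x) (Icc a b) :=
        fun z hz => ((hWderiv z (hsub hz)).continuousAt).continuousWithinAt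
      exact constant_of_has_deriv_right_zero hcont
        (fun x hx => (hWderiv x (hsub ⟨hx.1, hx.2.le⟩)).hasDerivWithinAt)
        b (right_mem_Icc.2 hab)
    intro x hx y hy
    rcases le_total x y with h | h
    · exact (key x hx y hy h).symm
    · exact key y hy x hx h
  have hW0 : ∀ x ∈ J, α' x * β x - α x * β' x = c := by
    intro x hx
    have := hWconst x hx 0 h0J
    rw [this, hα0]; ring
  have hcpos : 0 < c := hpos
  -- sign facts
  have hβ0pos : 0 < β 0 := hβpos 0 ⟨h2, h3⟩
  have hαbp : 0 < α xbp := hαpos xbp ⟨h3, h4⟩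
  -- β xap < 0
  have hβap_ne : β xap ≠ 0 := by
    intro h
    have := hW0 xap hapJ
    rw [h, hαap] at this
    simp at this
    linarith
  have hβap : β xap < 0 := by
    rcases lt_or_ge (β xap) 0 with h | h
    · exact h
    have hlt : 0 < β xap := lt_of_le_of_ne h (Ne.symm hβap_ne)
    exfalso
    have hcont : ContinuousAt β xap := (hβ' xap hapJ).continuousAt
    have hev : ∀ᶠ x in 𝓝[<] xap, 0 < β x :=
      nhdsWithin_le_nhds (hcont.eventually_ne hβap_ne |>.and
        (hcont (Ioi_mem_nhds hlt)) |>.mono fun x hx => hx.2)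
    have hmem : Ioo xbp xap ∈ 𝓝[<] xap := Ioo_mem_nhdsLT_of_mem ⟨h4, le_refl xap⟩
    obtain ⟨x, hx1, hx2⟩ := (hev.and (Filter.eventually_of_mem hmem fun x hx => hx)).exists
    exact absurd (hβneg2 x hx2) (not_lt.2 hx1.le)
  -- derivative of G = β/α
  set G : ℝ → ℝ := fun x => β x / α x with hG
  have hGderiv : ∀ x ∈ J, α x ≠ 0 → HasDerivAt G (-c / (α x) ^ 2) x := by
    intro x hx hαx
    have h := (hβ' x hx).div (hα' x hx) hαx
    have heq : -c = β' x * α x - β x * α' x := by linarith [hW0 x hx]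
    rw [heq]; exact h
  -- strict antitonicity of G on the two intervals
  have hsub1 : Ioo xbm (0:ℝ) ⊆ J := fun x hx =>
    hIccJ ⟨by linarith [hx.1], by linarith [hx.2]⟩
  have hsub2 : Ioo xbp xap ⊆ J := fun x hx =>
    hIccJ ⟨by linarith [hx.1], hx.2.le⟩
  have hαneg1 : ∀ x ∈ Ioo xbm (0:ℝ), α x < 0 := fun x hx =>
    hαneg x ⟨by linarith [hx.1], hx.2⟩
  have hαpos2 : ∀ x ∈ Ioo xbp xap, 0 < α x := fun x hx =>
    hαpos x ⟨by linarith [hx.1], hx.2⟩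
  have hanti : ∀ (D : Set ℝ), D = Ioo xbm (0:ℝ) ∨ D = Ioo xbp xap →
      StrictAntiOn G D := by
    rintro D hD
    have hDJ : D ⊆ J := by rcases hD with h | h <;> rw [h] <;> [exact hsub1; exact hsub2]
    have hDα : ∀ x ∈ D, α x ≠ 0 := by
      rcases hD with h | h <;> rw [h] <;> intro x hx
      · exact (hαneg1 x hx).ne
      · exact (hαpos2 x hx).ne'
    have hconv : Convex ℝ D := by
      rcases hD with h | h <;> rw [h] <;> exact convex_Ioo _ _
    have hDopen : IsOpen D := by
      rcases hD with h | h <;> rw [h] <;> exact isOpen_Ioo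
    apply strictAntiOn_of_deriv_neg hconv
    · exact fun x hx => ((hGderiv x (hDJ hx) (hDα x hx)).continuousAt).continuousWithinAt
    · intro x hx
      rw [hDopen.interior_eq] at hx
      rw [(hGderiv x (hDJ hx) (hDα x hx)).deriv]
      exact div_neg_of_neg_of_pos (by linarith) (pow_two_pos_of_ne_zero (hDα x hx))
  have hanti1 : StrictAntiOn G (Ioo xbm (0:ℝ)) := hanti _ (Or.inl rfl)
  have hanti2 : StrictAntiOn G (Ioo xbp xap) := hanti _ (Or.inr rfl)
  -- the condition is equivalent to G t = G s
  have hGeq : ∀ s ∈ Ioo xbm (0:ℝ), ∀ t ∈ Ioo xbp xap,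
      (β s * α t = β t * α s ↔ G t = G s) := by
    intro s hs t ht
    have hαs := hαneg1 s hs
    have hαt := hαpos2 t ht
    rw [hG]
    rw [div_eq_div_iff hαt.ne' hαs.ne]
    constructor <;> intro h <;> linarith
  -- existence
  have hex : ∀ s ∈ Ioo xbm (0:ℝ), ∃ t, t ∈ Ioo xbp xap ∧ β s * α t = β t * α s := by
    intro s hs
    have hαs : α s < 0 := hαneg1 s hs
    have hβs : 0 < β s := hβpos s ⟨hs.1, by linarith [hs.2]⟩
    set P : ℝ → ℝ := fun x => β s * α x - β x * α s with hP
    have hPcont : ContinuousOn P (Icc xbp xap) := by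
      intro x hx
      have hxJ : x ∈ J := hIccJ ⟨by linarith [hx.1], hx.2⟩
      have hc1 : ContinuousAt P x :=
        (continuousAt_const.mul (hα' x hxJ).continuousAt).sub
          ((hβ' x hxJ).continuousAt.mul continuousAt_const)
      exact hc1.continuousWithinAt
    have hPbp : 0 < P xbp := by
      simp only [hP, hβbp, zero_mul, sub_zero]
      exact mul_pos hβs hαbp
    have hPap : P xap < 0 := by
      have : P xap = -(β xap * α s) := by simp [hP, hαap]
      rw [this]
      linarith [mul_pos_of_neg_of_neg hβap hαs]
    obtain ⟨t, ht, hPt⟩ := intermediate_value_Ioo' h4.le hPcont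
      (show (0:ℝ) ∈ Ioo (P xap) (P xbp) from ⟨hPap, hPbp⟩)
    exact ⟨t, ht, by simpa [hP, sub_eq_zero] using hPt⟩
  choose! F hFmem hFeq using hex
  refine ⟨F, fun s hs => ⟨hFmem s hs, hFeq s hs, ?_⟩, ?_⟩
  · intro t ht hteq
    have h1' : G t = G s := (hGeq s hs t ht).1 hteq
    have h2' : G (F s) = G s := (hGeq s hs (F s) (hFmem s hs)).1 (hFeq s hs)
    exact hanti2.injOn ht (hFmem s hs) (h1'.trans h2'.symm)
  · intro s1 hs1 s2 hs2 h12
    have hGs : G s2 < G s1 := hanti1 hs1 hs2 h12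
    have e1 : G (F s1) = G s1 := (hGeq s1 hs1 (F s1) (hFmem s1 hs1)).1 (hFeq s1 hs1)
    have e2 : G (F s2) = G s2 := (hGeq s2 hs2 (F s2) (hFmem s2 hs2)).1 (hFeq s2 hs2)
    have : G (F s2) < G (F s1) := by rw [e1, e2]; exact hGs
    exact (hanti2.lt_iff_gt (hFmem s2 hs2) (hFmem s1 hs1)).1 this
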